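/- Let γ > 0, K ≥ 0, c ≥ 0, let α ∈ ℝ^d with ‖α‖ ≤ K, let σ be a real m×d matrix, let Π ⊆ ℝ^m be a set containing 0, and let N : ℝ^m → [0,∞) satisfy N(0) ≤ c. Define, for z ∈ ℝ^d, G(z) := inf_{π ∈ Π} [ (γ/2)‖σᵀπ − (z + α/γ)‖² + N(π) ] − α·z − ‖α‖²/(2γ). Then there exists a constant C > 0, depending only on γ, K and c, such that |G(z₁) − G(z₂)| ≤ C(1 + ‖z₁‖ + ‖z₂‖)‖z₁ − z₂‖ for all z₁, z₂ ∈ ℝ^d. -/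
import Mathlib


local notation "⟪" x ", " y "⟫" => @inner ℝ _ _ x y

/-- The minimized driver of the infinite-horizon quadratic BSDEs:
`G(z) = inf_{π ∈ Π} [(γ/2)‖σᵀπ − (z + α/γ)‖² + N(π)] − α·z − ‖α‖²/(2γ)`. -/
noncomputable def driverG (γ : ℝ) {m d : ℕ} (α : EuclideanSpace ℝ (Fin d))
    (σ : Matrix (Fin m) (Fin d) ℝ) (P : Set (EuclideanSpace ℝ (Fin m)))
    (N : EuclideanSpace ℝ (Fin m) → ℝ) (z : EuclideanSpace ℝ (Fin d)) : ℝ :=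
  sInf ((fun π => γ / 2 * ‖Matrix.toEuclideanLin σ.transpose π - (z + γ⁻¹ • α)‖ ^ 2 + N π) '' P)
    - ⟪α, z⟫ - ‖α‖ ^ 2 / (2 * γ)

set_option maxHeartbeats 1600000 in
/-- **Local Lipschitz estimate in `z` for the minimized driver**: there is a constant
`C > 0`, depending only on `γ`, `K` and `c`, such that for any data with `0 ∈ Π`,
`N ≥ 0`, `N(0) ≤ c` and `‖α‖ ≤ K`, one has
`|G(z₁) − G(z₂)| ≤ C (1 + ‖z₁‖ + ‖z₂‖) ‖z₁ − z₂‖`. -/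
theorem driver_lipschitz (γ K c : ℝ) (hγ : 0 < γ) (hK : 0 ≤ K) (hc : 0 ≤ c) :
    ∃ C : ℝ, 0 < C ∧
      ∀ (m d : ℕ) (α : EuclideanSpace ℝ (Fin d)) (σ : Matrix (Fin m) (Fin d) ℝ)
        (P : Set (EuclideanSpace ℝ (Fin m))) (N : EuclideanSpace ℝ (Fin m) → ℝ),
        (0 : EuclideanSpace ℝ (Fin m)) ∈ P → (∀ π, 0 ≤ N π) → N 0 ≤ c → ‖α‖ ≤ K →
        ∀ z₁ z₂ : EuclideanSpace ℝ (Fin d),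
          |driverG γ α σ P N z₁ - driverG γ α σ P N z₂| ≤
            C * (1 + ‖z₁‖ + ‖z₂‖) * ‖z₁ - z₂‖ := by
  obtain ⟨s, hs, hs2⟩ : ∃ s : ℝ, 0 ≤ s ∧ γ * s ^ 2 = 2 * (c + 1) := by
    refine ⟨Real.sqrt (2 * (c + 1) / γ), Real.sqrt_nonneg _, ?_⟩
    rw [Real.sq_sqrt (by positivity)]
    field_simp
  obtain ⟨k, hk, hk_def⟩ : ∃ k : ℝ, 0 ≤ k ∧ k = K / γ :=
    ⟨K / γ, by positivity, rfl⟩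
  obtain ⟨D, hD_def, hD3⟩ : ∃ D : ℝ, D = 3 + 2 * k + 2 * s ∧ 3 ≤ D :=
    ⟨3 + 2 * k + 2 * s, rfl, by linarith⟩
  have hD0 : (0:ℝ) < D := by linarith
  refine ⟨γ * D / 2 + K + 1, by positivity, ?_⟩
  intro m d α σ P N h0P hN hN0 hα z₁ z₂
  set A := Matrix.toEuclideanLin σ.transpose with hA
  set F : EuclideanSpace ℝ (Fin d) → EuclideanSpace ℝ (Fin m) → ℝ :=
    fun z π => γ / 2 * ‖A π - (z + γ⁻¹ • α)‖ ^ 2 + N π with hF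
  have hFnonneg : ∀ z π, 0 ≤ F z π := by
    intro z π
    have h1 : (0:ℝ) ≤ γ / 2 * ‖A π - (z + γ⁻¹ • α)‖ ^ 2 := by positivity
    have h2 := hN π
    show 0 ≤ γ / 2 * ‖A π - (z + γ⁻¹ • α)‖ ^ 2 + N π
    linarith
  have hne : ∀ z, ((F z) '' P).Nonempty := fun z => ⟨F z 0, 0, h0P, rfl⟩
  have hbdd : ∀ z, BddBelow ((F z) '' P) := by
    intro z
    refine ⟨0, ?_⟩
    rintro x ⟨π, -, rfl⟩
    exact hFnonneg z π
  have hA0 : A (0 : EuclideanSpace ℝ (Fin m)) = 0 := map_zero _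
  have hwnorm : ∀ z : EuclideanSpace ℝ (Fin d), ‖z + γ⁻¹ • α‖ ≤ ‖z‖ + k := by
    intro z
    have h1 : ‖z + γ⁻¹ • α‖ ≤ ‖z‖ + ‖γ⁻¹ • α‖ := norm_add_le _ _
    have h2 : ‖γ⁻¹ • α‖ = γ⁻¹ * ‖α‖ := by
      rw [norm_smul, Real.norm_eq_abs, abs_of_pos (by positivity)]
    have h3 : γ⁻¹ * ‖α‖ ≤ k := by
      rw [hk_def, div_eq_inv_mul]
      exact mul_le_mul_of_nonneg_left hα (by positivity)
    linarith
  have hγ2 : (0:ℝ) ≤ γ / 2 := by positivity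
  have hF0 : ∀ z, F z 0 ≤ γ / 2 * (‖z‖ + k) ^ 2 + c := by
    intro z
    have h1 : ‖A 0 - (z + γ⁻¹ • α)‖ = ‖z + γ⁻¹ • α‖ := by
      rw [hA0, zero_sub, norm_neg]
    have h2 := hwnorm z
    have h3 : (0:ℝ) ≤ ‖z + γ⁻¹ • α‖ := norm_nonneg _
    have h4 : ‖z + γ⁻¹ • α‖ ^ 2 ≤ (‖z‖ + k) ^ 2 := by nlinarith
    have h5 := mul_le_mul_of_nonneg_left h4 hγ2
    show γ / 2 * ‖A 0 - (z + γ⁻¹ • α)‖ ^ 2 + N 0 ≤ γ / 2 * (‖z‖ + k) ^ 2 + c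
    rw [h1]
    linarith [hN0]
  -- main one-sided estimate
  have key : ∀ x y : EuclideanSpace ℝ (Fin d),
      sInf ((F x) '' P) ≤ sInf ((F y) '' P)
        + γ * D / 2 * (1 + ‖x‖ + ‖y‖) * ‖x - y‖ := by
    intro x y
    rw [← sub_le_iff_le_add]
    apply le_csInf (hne y)
    rintro b ⟨π, hπ, rfl⟩
    rw [sub_le_iff_le_add]
    have hax : (0:ℝ) ≤ ‖x‖ := norm_nonneg x
    have hay : (0:ℝ) ≤ ‖y‖ := norm_nonneg y
    set t : ℝ := ‖x - y‖ with ht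
    set Z : ℝ := 1 + ‖x‖ + ‖y‖ with hZ
    have ht0 : 0 ≤ t := norm_nonneg _
    have htZ : t ≤ ‖x‖ + ‖y‖ := norm_sub_le _ _
    have hZ1 : 1 ≤ Z := by rw [hZ]; linarith
    set M : ℝ := ‖y‖ + k + s with hM
    have hM0 : 0 ≤ M := by rw [hM]; positivity
    set e : ℝ := ‖A π - (y + γ⁻¹ • α)‖ with he
    have he0 : 0 ≤ e := norm_nonneg _
    -- common estimate: 2M + t ≤ D * Z
    have hDZ : 2 * M + t ≤ D * Z := by
      rw [hM, hD_def, hZ]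
      nlinarith [mul_nonneg hk (by linarith : (0:ℝ) ≤ ‖x‖ + ‖y‖),
        mul_nonneg hs (by linarith : (0:ℝ) ≤ ‖x‖ + ‖y‖)]
    by_cases hcase : e ≤ M
    · -- near-optimal case: compare at the same π
      have h1 : sInf ((F x) '' P) ≤ F x π := csInf_le (hbdd x) ⟨π, hπ, rfl⟩
      have heq : A π - (x + γ⁻¹ • α) = (A π - (y + γ⁻¹ • α)) - (x - y) := by
        abel
      have h2 : ‖A π - (x + γ⁻¹ • α)‖ ≤ e + t := by
        rw [heq]; exact norm_sub_le _ _
      have h2' : ‖A π - (x + γ⁻¹ • α)‖ ^ 2 ≤ (e + t) ^ 2 :=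
        pow_le_pow_left₀ (norm_nonneg _) h2 2
      have h3 : F x π ≤ γ / 2 * (e + t) ^ 2 + N π := by
        have h5 := mul_le_mul_of_nonneg_left h2' hγ2
        show γ / 2 * ‖A π - (x + γ⁻¹ • α)‖ ^ 2 + N π ≤ γ / 2 * (e + t) ^ 2 + N π
        linarith
      have h4 : (2 * e + t) * t ≤ D * Z * t :=
        mul_le_mul_of_nonneg_right (by linarith) ht0
      have h6 := mul_le_mul_of_nonneg_left h4 hγ2
      have h7 : γ / 2 * (e + t) ^ 2 + N π ≤ F y π + γ * D / 2 * Z * t := by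
        show γ / 2 * (e + t) ^ 2 + N π ≤ γ / 2 * e ^ 2 + N π + γ * D / 2 * Z * t
        nlinarith [h6]
      exact h1.trans (h3.trans h7)
    · -- far case: F y π is already large
      push_neg at hcase
      have h1 : sInf ((F x) '' P) ≤ F x 0 := csInf_le (hbdd x) ⟨0, h0P, rfl⟩
      have h2 : F x 0 ≤ γ / 2 * (‖x‖ + k) ^ 2 + c := hF0 x
      have h3 : γ / 2 * M ^ 2 ≤ F y π := by
        have hMe : M ^ 2 ≤ e ^ 2 := by nlinarith
        have h5 := mul_le_mul_of_nonneg_left hMe hγ2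
        have h6 := hN π
        show γ / 2 * M ^ 2 ≤ γ / 2 * e ^ 2 + N π
        linarith
      have h4 : γ / 2 * (‖y‖ + k) ^ 2 + c + 1 ≤ γ / 2 * M ^ 2 := by
        have hyK : (0:ℝ) ≤ ‖y‖ + k := by positivity
        rw [hM]
        nlinarith [mul_nonneg (mul_nonneg hyK hs) hγ.le, hs2]
      have h5 : γ / 2 * (‖x‖ + k) ^ 2 ≤ γ / 2 * (‖y‖ + k) ^ 2
          + γ * D / 2 * Z * t := by
        have hxy : ‖x‖ + k ≤ (‖y‖ + k) + t := by
          have hx2 : ‖x‖ - ‖y‖ ≤ t := by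
            rw [ht]
            calc ‖x‖ - ‖y‖ ≤ |‖x‖ - ‖y‖| := le_abs_self _
              _ ≤ ‖x - y‖ := abs_norm_sub_norm_le x y
          linarith
        have hsq : (‖x‖ + k) ^ 2 ≤ ((‖y‖ + k) + t) ^ 2 :=
          pow_le_pow_left₀ (by positivity) hxy 2
        have hsum : (2 * (‖y‖ + k) + t) * t ≤ D * Z * t := by
          refine mul_le_mul_of_nonneg_right ?_ ht0
          have h8 : 2 * (‖y‖ + k) + t ≤ 2 * M + t := by
            rw [hM]; nlinarith
          linarith
        have h6 := mul_le_mul_of_nonneg_left hsq hγ2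
        have h7 := mul_le_mul_of_nonneg_left hsum hγ2
        nlinarith [h6, h7]
      have c1 : sInf ((F x) '' P) ≤ γ / 2 * (‖x‖ + k) ^ 2 + c := h1.trans h2
      have c2 : γ / 2 * (‖x‖ + k) ^ 2 + c
          ≤ γ / 2 * (‖y‖ + k) ^ 2 + c + γ * D / 2 * Z * t := by linarith [h5]
      have c3 : γ / 2 * (‖y‖ + k) ^ 2 + c + γ * D / 2 * Z * t
          ≤ F y π + γ * D / 2 * Z * t := by linarith [h3, h4]
      exact c1.trans (c2.trans c3)
  have hGdef : ∀ z : EuclideanSpace ℝ (Fin d),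
      driverG γ α σ P N z = sInf ((F z) '' P) - ⟪α, z⟫ - ‖α‖ ^ 2 / (2 * γ) :=
    fun z => rfl
  have habs : |sInf ((F z₁) '' P) - sInf ((F z₂) '' P)|
      ≤ γ * D / 2 * (1 + ‖z₁‖ + ‖z₂‖) * ‖z₁ - z₂‖ := by
    rw [abs_sub_le_iff]
    constructor
    · linarith [key z₁ z₂]
    · have h := key z₂ z₁
      have h1 : ‖z₂ - z₁‖ = ‖z₁ - z₂‖ := norm_sub_rev _ _
      have h2 : (1:ℝ) + ‖z₂‖ + ‖z₁‖ = 1 + ‖z₁‖ + ‖z₂‖ := by ring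
      rw [h1, h2] at h
      linarith
  have hinner : |⟪α, z₁⟫ - ⟪α, z₂⟫| ≤ K * ‖z₁ - z₂‖ := by
    have h1 : ⟪α, z₁⟫ - ⟪α, z₂⟫ = ⟪α, z₁ - z₂⟫ := (inner_sub_right α z₁ z₂).symm
    rw [h1]
    calc |⟪α, z₁ - z₂⟫| ≤ ‖α‖ * ‖z₁ - z₂‖ := abs_real_inner_le_norm _ _
      _ ≤ K * ‖z₁ - z₂‖ := mul_le_mul_of_nonneg_right hα (norm_nonneg _)
  rw [hGdef z₁, hGdef z₂]
  have hdiff : sInf ((F z₁) '' P) - ⟪α, z₁⟫ - ‖α‖ ^ 2 / (2 * γ)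
      - (sInf ((F z₂) '' P) - ⟪α, z₂⟫ - ‖α‖ ^ 2 / (2 * γ))
      = (sInf ((F z₁) '' P) - sInf ((F z₂) '' P)) - (⟪α, z₁⟫ - ⟪α, z₂⟫) := by ring
  rw [hdiff]
  have ht0 : (0:ℝ) ≤ ‖z₁ - z₂‖ := norm_nonneg _
  have hZ1 : (1:ℝ) ≤ 1 + ‖z₁‖ + ‖z₂‖ := by
    linarith [norm_nonneg z₁, norm_nonneg z₂]
  have h8 : ‖z₁ - z₂‖ ≤ (1 + ‖z₁‖ + ‖z₂‖) * ‖z₁ - z₂‖ :=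
    le_mul_of_one_le_left ht0 hZ1
  have h9 : K * ‖z₁ - z₂‖ ≤ K * ((1 + ‖z₁‖ + ‖z₂‖) * ‖z₁ - z₂‖) :=
    mul_le_mul_of_nonneg_left h8 hK
  calc |(sInf ((F z₁) '' P) - sInf ((F z₂) '' P)) - (⟪α, z₁⟫ - ⟪α, z₂⟫)|
      ≤ |sInf ((F z₁) '' P) - sInf ((F z₂) '' P)| + |⟪α, z₁⟫ - ⟪α, z₂⟫| :=
        abs_sub _ _
    _ ≤ γ * D / 2 * (1 + ‖z₁‖ + ‖z₂‖) * ‖z₁ - z₂‖ + K * ‖z₁ - z₂‖ := by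
        linarith
    _ ≤ (γ * D / 2 + K + 1) * (1 + ‖z₁‖ + ‖z₂‖) * ‖z₁ - z₂‖ := by
        have h10 : (0:ℝ) ≤ (1 + ‖z₁‖ + ‖z₂‖) * ‖z₁ - z₂‖ := by positivity
        nlinarith [h9, h10]
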